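/- Let f : ℝ → ℝ₊ be a log-concave function and fix v ∈ (0,1). Then the function (a,b) ↦ I♭(f,[a,b])(v) is nonincreasing in b and nondecreasing in a on the domain {a < b} ⊂ ℝ² (over pairs for which 0 < ∫_a^b f < ∞). -/

import Mathlib

open scoped Classical
open MeasureTheory

/-- Half-line isoperimetric profile `I♭(f,[a,b])(v)`: the infimum of the (normalized)
boundary densities of half-lines `(−∞,x]` or `[x,∞)` carrying mass `v` of the probability
measure with density proportional to `f` on `[a,b]`. -/
noncomputable def Iflat (f : ℝ → ℝ) (a b v : ℝ) : ℝ :=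
  sInf { y : ℝ | ∃ x ∈ Set.Icc a b,
    ((∫ s in a..x, f s) = v * ∫ s in a..b, f s ∨
     (∫ s in x..b, f s) = v * ∫ s in a..b, f s) ∧
    y = f x / ∫ s in a..b, f s }

/-- A nonnegative function is log-concave if `−log f` is convex
(equivalently, the multiplicative inequality below). -/
def LogConcaveFn (f : ℝ → ℝ) : Prop :=
  (∀ x, 0 ≤ f x) ∧ ∀ x y : ℝ, ∀ t ∈ Set.Icc (0:ℝ) 1,
    f x ^ t * f y ^ (1 - t) ≤ f (t * x + (1 - t) * y)

lemma integral_exp_mul' (c a b : ℝ) (hc : c ≠ 0) :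
    ∫ y in a..b, Real.exp (c * y) = (Real.exp (c * b) - Real.exp (c * a)) / c := by
  have hderiv : ∀ y ∈ Set.uIcc a b,
      HasDerivAt (fun y => Real.exp (c * y) / c) (Real.exp (c * y)) y := by
    intro y _
    have h1 : HasDerivAt (fun y : ℝ => c * y) c y := by
      simpa using (hasDerivAt_id y).const_mul c
    have h2 := (Real.hasDerivAt_exp (c * y)).comp y h1
    have h3 := h2.div_const c
    simpa [mul_div_cancel_right₀, hc, mul_comm] using h3
  have hint : IntervalIntegrable (fun y => Real.exp (c * y)) volume a b :=
    (Real.continuous_exp.comp (continuous_const.mul continuous_id)).intervalIntegrable a b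
  rw [intervalIntegral.integral_eq_sub_of_hasDerivAt hderiv hint]
  ring

lemma lemA (f : ℝ → ℝ) (hf : LogConcaveFn f) {a x x' : ℝ} (hax : a ≤ x) (hxx : x ≤ x')
    (hi1 : IntervalIntegrable f volume a x) (hi2 : IntervalIntegrable f volume x x') :
    (f x' - f x) * ∫ s in a..x, f s ≤ f x * ∫ s in x..x', f s := by
  obtain ⟨hf0, hfc⟩ := hf
  have hI1 : 0 ≤ ∫ s in a..x, f s := intervalIntegral.integral_nonneg hax fun u _ => hf0 u
  have hI2 : 0 ≤ ∫ s in x..x', f s := intervalIntegral.integral_nonneg hxx fun u _ => hf0 u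
  rcases le_or_gt (f x') (f x) with h | h
  · nlinarith [hf0 x]
  have hxx' : x < x' := by
    rcases eq_or_lt_of_le hxx with rfl | h'
    · exact absurd rfl h.ne'
    · exact h'
  have hdx : x' - x ≠ 0 := sub_ne_zero.mpr hxx'.ne'
  rcases (eq_or_lt_of_le (hf0 x)).symm with hfx0 | hfx0
  swap
  · -- f x = 0 : f vanishes on [a, x]
    have hz : Set.EqOn f 0 (Set.uIcc a x) := by
      intro y hy
      rw [Set.uIcc_of_le hax] at hy
      rcases eq_or_lt_of_le hy.2 with rfl | hyx
      · exact hfx0.symm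
      · by_contra hne
        have hfy : 0 < f y := lt_of_le_of_ne (hf0 y) (Ne.symm hne)
        set t : ℝ := (x' - x) / (x' - y) with ht
        have hdy : 0 < x' - y := by linarith
        have ht0 : 0 < t := div_pos (by linarith) hdy
        have ht1 : t ≤ 1 := by
          rw [div_le_one hdy]; linarith
        have hdyne : x' - y ≠ 0 := ne_of_gt hdy
        have harg : t * y + (1 - t) * x' = x := by
          rw [ht]; field_simp; ring
        have := hfc y x' t ⟨le_of_lt ht0, ht1⟩
        rw [harg, ← hfx0] at this
        have : (0:ℝ) < f y ^ t * f x' ^ (1 - t) :=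
          mul_pos (Real.rpow_pos_of_pos hfy t) (Real.rpow_pos_of_pos (by linarith) (1 - t))
        linarith
    rw [intervalIntegral.integral_congr hz]
    simp [← hfx0]
  -- main case : 0 < f x < f x'
  have hfx' : 0 < f x' := lt_trans hfx0 h
  set L : ℝ := Real.log (f x) with hLdef
  set L' : ℝ := Real.log (f x') with hL'def
  set c : ℝ := (L' - L) / (x' - x) with hcdef
  have hLL : L < L' := Real.log_lt_log hfx0 h
  have hc : 0 < c := div_pos (by linarith) (by linarith)
  -- upper bound on [a, x]
  have h1 : ∀ y ∈ Set.Icc a x, f y ≤ f x * Real.exp (c * (y - x)) := by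
    intro y hy
    rcases eq_or_lt_of_le hy.2 with rfl | hyx
    · simp
    rcases (eq_or_lt_of_le (hf0 y)).symm with hfy | hfy
    swap
    · rw [← hfy]
      positivity
    set t : ℝ := (x' - x) / (x' - y) with ht
    have hdy : 0 < x' - y := by linarith
    have ht0 : 0 < t := div_pos (by linarith) hdy
    have ht1 : t ≤ 1 := by rw [div_le_one hdy]; linarith
    have hdyne : x' - y ≠ 0 := ne_of_gt hdy
    have harg : t * y + (1 - t) * x' = x := by rw [ht]; field_simp; ring
    have key := hfc y x' t ⟨le_of_lt ht0, ht1⟩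
    rw [harg] at key
    have hrw : f y ^ t * f x' ^ (1 - t)
        = Real.exp (Real.log (f y) * t + L' * (1 - t)) := by
      rw [Real.rpow_def_of_pos hfy, Real.rpow_def_of_pos hfx', Real.exp_add]
    rw [hrw] at key
    have key2 : Real.log (f y) * t + L' * (1 - t) ≤ L := by
      have := Real.exp_le_exp.mpr (le_of_eq (Real.exp_log hfx0).symm)
      calc Real.log (f y) * t + L' * (1 - t)
          = Real.log (Real.exp (Real.log (f y) * t + L' * (1 - t))) := (Real.log_exp _).symm
        _ ≤ Real.log (f x) := Real.log_le_log (Real.exp_pos _) key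
    have hid : t * (L + c * (y - x)) = L - L' * (1 - t) := by
      rw [ht, hcdef]; field_simp; ring
    have hlog : Real.log (f y) ≤ L + c * (y - x) := by
      have h' : t * Real.log (f y) ≤ t * (L + c * (y - x)) := by
        rw [hid]; linarith
      exact le_of_mul_le_mul_left h' ht0
    calc f y = Real.exp (Real.log (f y)) := (Real.exp_log hfy).symm
      _ ≤ Real.exp (L + c * (y - x)) := Real.exp_le_exp.mpr hlog
      _ = f x * Real.exp (c * (y - x)) := by
          rw [Real.exp_add, Real.exp_log hfx0]
  -- lower bound on [x, x']
  have h2 : ∀ y ∈ Set.Icc x x', f x * Real.exp (c * (y - x)) ≤ f y := by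
    intro y hy
    set t : ℝ := (x' - y) / (x' - x) with ht
    have ht0 : 0 ≤ t := div_nonneg (by linarith [hy.2]) (by linarith)
    have ht1 : t ≤ 1 := by
      rw [div_le_one (by linarith : (0:ℝ) < x' - x)]; linarith [hy.1]
    have hdxne : x' - x ≠ 0 := hdx
    have harg : t * x + (1 - t) * x' = y := by rw [ht]; field_simp; ring
    have key := hfc x x' t ⟨ht0, ht1⟩
    rw [harg] at key
    have hrw : f x ^ t * f x' ^ (1 - t) = Real.exp (L * t + L' * (1 - t)) := by
      rw [Real.rpow_def_of_pos hfx0, Real.rpow_def_of_pos hfx', Real.exp_add]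
    have hid : L * t + L' * (1 - t) = L + c * (y - x) := by
      rw [ht, hcdef]; field_simp; ring
    rw [hrw, hid] at key
    calc f x * Real.exp (c * (y - x)) = Real.exp (L + c * (y - x)) := by
          rw [Real.exp_add, Real.exp_log hfx0]
      _ ≤ f y := key
  -- integral comparison
  have hcont : ∀ p q : ℝ, IntervalIntegrable (fun y => f x * Real.exp (c * (y - x))) volume p q :=
    fun p q => (Continuous.intervalIntegrable (by continuity) p q)
  have hval : ∀ p q : ℝ, (∫ y in p..q, f x * Real.exp (c * (y - x)))
      = f x * Real.exp (-(c * x)) * ((Real.exp (c * q) - Real.exp (c * p)) / c) := by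
    intro p q
    have e : (fun y => f x * Real.exp (c * (y - x)))
        = fun y => (f x * Real.exp (-(c * x))) * Real.exp (c * y) := by
      funext y
      rw [mul_assoc, ← Real.exp_add]
      ring_nf
    rw [e, intervalIntegral.integral_const_mul, integral_exp_mul' c p q hc.ne']
  have E1 : (∫ s in a..x, f s) ≤ f x / c := by
    have step1 : (∫ s in a..x, f s) ≤ ∫ y in a..x, f x * Real.exp (c * (y - x)) :=
      intervalIntegral.integral_mono_on hax hi1 (hcont a x) h1
    have step2 : (∫ y in a..x, f x * Real.exp (c * (y - x)))
        = f x * Real.exp (-(c * x)) * ((Real.exp (c * x) - Real.exp (c * a)) / c) := hval a x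
    have hee : Real.exp (-(c * x)) * Real.exp (c * x) = 1 := by
      rw [← Real.exp_add]; simp
    have hposa : 0 < Real.exp (-(c * x)) * Real.exp (c * a) := by positivity
    have expand : f x * Real.exp (-(c * x)) * ((Real.exp (c * x) - Real.exp (c * a)) / c)
        = (f x * (Real.exp (-(c * x)) * Real.exp (c * x))
            - f x * (Real.exp (-(c * x)) * Real.exp (c * a))) / c := by ring
    have hnum : f x * (Real.exp (-(c * x)) * Real.exp (c * x))
        - f x * (Real.exp (-(c * x)) * Real.exp (c * a)) ≤ f x := by
      rw [hee, mul_one]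
      nlinarith [hfx0.le, hposa]
    have : f x * Real.exp (-(c * x)) * ((Real.exp (c * x) - Real.exp (c * a)) / c) ≤ f x / c := by
      rw [expand]
      exact (div_le_div_iff_of_pos_right hc).mpr hnum
    linarith [step1, step2.le]
  have hexp' : Real.exp (c * (x' - x)) = f x' / f x := by
    have : c * (x' - x) = L' - L := by rw [hcdef]; field_simp
    rw [this, Real.exp_sub, Real.exp_log hfx0, Real.exp_log hfx']
  have E2 : (f x' - f x) / c ≤ ∫ s in x..x', f s := by
    have step1 : (∫ y in x..x', f x * Real.exp (c * (y - x))) ≤ ∫ s in x..x', f s :=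
      intervalIntegral.integral_mono_on hxx (hcont x x') hi2 h2
    have step2 : (∫ y in x..x', f x * Real.exp (c * (y - x)))
        = f x * Real.exp (-(c * x)) * ((Real.exp (c * x') - Real.exp (c * x)) / c) := hval x x'
    have hval2 : f x * Real.exp (-(c * x)) * ((Real.exp (c * x') - Real.exp (c * x)) / c)
        = (f x' - f x) / c := by
      have e1 : Real.exp (c * x') = Real.exp (c * x) * Real.exp (c * (x' - x)) := by
        rw [← Real.exp_add]; ring_nf
      have hee : Real.exp (-(c * x)) * Real.exp (c * x) = 1 := by
        rw [← Real.exp_add]; simp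
      rw [e1, hexp']
      have expand : f x * Real.exp (-(c * x))
            * ((Real.exp (c * x) * (f x' / f x) - Real.exp (c * x)) / c)
          = (Real.exp (-(c * x)) * Real.exp (c * x)) * (f x * (f x' / f x - 1)) / c := by
        ring
      rw [expand, hee, one_mul]
      have : f x * (f x' / f x - 1) = f x' - f x := by
        field_simp
      rw [this]
    rw [step2, hval2] at step1
    exact step1
  calc (f x' - f x) * ∫ s in a..x, f s ≤ (f x' - f x) * (f x / c) :=
        mul_le_mul_of_nonneg_left E1 (by linarith)
    _ = f x * ((f x' - f x) / c) := by ring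
    _ ≤ f x * ∫ s in x..x', f s := mul_le_mul_of_nonneg_left E2 hfx0.le

lemma lemC (f : ℝ → ℝ) (hf : LogConcaveFn f) {a x b b' α : ℝ}
    (hax : a ≤ x) (hxb : x ≤ b) (hbb' : b ≤ b')
    (hi : IntervalIntegrable f volume a b')
    (hα : 0 < α) (hα1 : α ≤ 1)
    (hx : (∫ s in a..x, f s) = α * ∫ s in a..b, f s) :
    ∃ x' ∈ Set.Icc x b', (∫ s in a..x', f s) = α * ∫ s in a..b', f s ∧
      f x' * (∫ s in a..b, f s) ≤ f x * ∫ s in a..b', f s := by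
  have hxb' : x ≤ b' := le_trans hxb hbb'
  have hab : a ≤ b := le_trans hax hxb
  have hab' : a ≤ b' := le_trans hab hbb'
  have hsub : ∀ p q : ℝ, a ≤ p → p ≤ q → q ≤ b' → IntervalIntegrable f volume p q := by
    intro p q h1 h2 h3
    refine hi.mono_set ?_
    rw [Set.uIcc_of_le h2, Set.uIcc_of_le hab']
    exact Set.Icc_subset_Icc h1 h3
  have hcont : ContinuousOn (fun y => ∫ s in a..y, f s) (Set.Icc x b') := by
    have h0 := intervalIntegral.continuousOn_primitive_interval' hi
      (Set.left_mem_uIcc (a := a) (b := b'))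
    refine h0.mono ?_
    rw [Set.uIcc_of_le hab']
    exact Set.Icc_subset_Icc hax le_rfl
  have hadd : ∀ p q r : ℝ, a ≤ p → p ≤ q → q ≤ r → r ≤ b' →
      (∫ s in p..q, f s) + ∫ s in q..r, f s = ∫ s in p..r, f s := by
    intro p q r h1 h2 h3 h4
    exact intervalIntegral.integral_add_adjacent_intervals
      (hsub p q h1 h2 (le_trans h3 h4)) (hsub q r (le_trans h1 h2) h3 h4)
  have hnn : ∀ p q : ℝ, p ≤ q → 0 ≤ ∫ s in p..q, f s := fun p q h =>
    intervalIntegral.integral_nonneg h fun u _ => hf.1 u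
  set T : ℝ := ∫ s in a..b, f s with hT
  set T' : ℝ := ∫ s in a..b', f s with hT'
  have hTT' : T ≤ T' := by
    have := hadd a b b' le_rfl hab hbb' le_rfl
    have h2 := hnn b b' hbb'
    linarith
  have hT'0 : 0 ≤ T' := hnn a b' hab'
  have hT0 : 0 ≤ T := hnn a b hab
  have hmem : α * T' ∈ Set.Icc ((fun y => ∫ s in a..y, f s) x)
      ((fun y => ∫ s in a..y, f s) b') := by
    simp only [hx]
    constructor
    · exact mul_le_mul_of_nonneg_left hTT' hα.le
    · calc α * T' ≤ 1 * T' := mul_le_mul_of_nonneg_right hα1 hT'0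
        _ = T' := one_mul T'
  obtain ⟨x', hx'mem, hux'⟩ := intermediate_value_Icc hxb' hcont hmem
  refine ⟨x', hx'mem, hux', ?_⟩

  have hkey := lemA f hf hax hx'mem.1 (hsub a x le_rfl hax hxb')
    (hsub x x' hax hx'mem.1 hx'mem.2)
  have hux'' : (∫ s in a..x', f s) = α * T' := hux'
  have hmid : (∫ s in x..x', f s) = α * T' - α * T := by
    have := hadd a x x' le_rfl hax hx'mem.1 hx'mem.2
    rw [hx, hux''] at this
    linarith [this]
  rw [hx, hmid] at hkey
  have hkey2 : α * ((f x' - f x) * T) ≤ α * (f x * (T' - T)) := by ring_nf; ring_nf at hkey; linarith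
  have := (mul_le_mul_iff_right₀ hα).mp hkey2
  nlinarith [hf.1 x, hf.1 x']

lemma lemB (f : ℝ → ℝ) (hf : LogConcaveFn f) {v a b b' : ℝ} (hv : v ∈ Set.Ioo (0:ℝ) 1)
    (hab : a ≤ b) (hbb' : b ≤ b')
    (hi : IntervalIntegrable f volume a b')
    (hpos : 0 < ∫ s in a..b, f s) :
    Iflat f a b' v ≤ Iflat f a b v := by
  obtain ⟨hv0, hv1⟩ := hv
  have hab' : a ≤ b' := le_trans hab hbb'
  have hsub : ∀ p q : ℝ, a ≤ p → p ≤ q → q ≤ b' → IntervalIntegrable f volume p q := by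
    intro p q h1 h2 h3
    refine hi.mono_set ?_
    rw [Set.uIcc_of_le h2, Set.uIcc_of_le hab']
    exact Set.Icc_subset_Icc h1 h3
  have hadd : ∀ p q r : ℝ, a ≤ p → p ≤ q → q ≤ r → r ≤ b' →
      (∫ s in p..q, f s) + ∫ s in q..r, f s = ∫ s in p..r, f s := by
    intro p q r h1 h2 h3 h4
    exact intervalIntegral.integral_add_adjacent_intervals
      (hsub p q h1 h2 (le_trans h3 h4)) (hsub q r (le_trans h1 h2) h3 h4)
  have hnn : ∀ p q : ℝ, p ≤ q → 0 ≤ ∫ s in p..q, f s := fun p q h =>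
    intervalIntegral.integral_nonneg h fun u _ => hf.1 u
  set T : ℝ := ∫ s in a..b, f s with hT
  set T' : ℝ := ∫ s in a..b', f s with hT'
  have hTT' : T ≤ T' := by
    have := hadd a b b' le_rfl hab hbb' le_rfl
    have h2 := hnn b b' hbb'
    linarith
  have hT'pos : 0 < T' := lt_of_lt_of_le hpos hTT'
  -- the set for (a,b) is nonempty
  have hcontab : ContinuousOn (fun y => ∫ s in a..y, f s) (Set.Icc a b) := by
    have h0 := intervalIntegral.continuousOn_primitive_interval' hi
      (Set.left_mem_uIcc (a := a) (b := b'))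
    refine h0.mono ?_
    rw [Set.uIcc_of_le hab']
    exact Set.Icc_subset_Icc le_rfl hbb'
  have hne : { y : ℝ | ∃ x ∈ Set.Icc a b,
      ((∫ s in a..x, f s) = v * ∫ s in a..b, f s ∨
       (∫ s in x..b, f s) = v * ∫ s in a..b, f s) ∧
      y = f x / ∫ s in a..b, f s }.Nonempty := by
    have hmem : v * T ∈ Set.Icc ((fun y => ∫ s in a..y, f s) a)
        ((fun y => ∫ s in a..y, f s) b) := by
      simp only [intervalIntegral.integral_same]
      constructor
      · positivity
      · nlinarith
    obtain ⟨x₀, hx₀mem, hux₀⟩ := intermediate_value_Icc hab hcontab hmem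
    exact ⟨f x₀ / T, x₀, hx₀mem, Or.inl hux₀, rfl⟩
  have hbdd : BddBelow { y : ℝ | ∃ x ∈ Set.Icc a b',
      ((∫ s in a..x, f s) = v * ∫ s in a..b', f s ∨
       (∫ s in x..b', f s) = v * ∫ s in a..b', f s) ∧
      y = f x / ∫ s in a..b', f s } := by
    refine ⟨0, ?_⟩
    rintro y ⟨z, _, _, rfl⟩
    exact div_nonneg (hf.1 z) hT'pos.le
  refine le_csInf hne ?_
  rintro y ⟨x, hx, hor, rfl⟩
  -- in both cases produce a witness x' with the same-type condition for (a, b')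
  have main : ∃ x' ∈ Set.Icc a b',
      ((∫ s in a..x', f s) = v * T' ∨ (∫ s in x'..b', f s) = v * T') ∧
      f x' * T ≤ f x * T' := by
    rcases hor with hL | hR
    · obtain ⟨x', hx'mem, hux', hineq⟩ := lemC f hf hx.1 hx.2 hbb' hi hv0 hv1.le hL
      exact ⟨x', ⟨le_trans hx.1 hx'mem.1, hx'mem.2⟩, Or.inl hux', hineq⟩
    · have hL : (∫ s in a..x, f s) = (1 - v) * T := by
        have := hadd a x b le_rfl hx.1 hx.2 hbb'
        rw [hR] at this
        linarith
      obtain ⟨x', hx'mem, hux', hineq⟩ := lemC f hf hx.1 hx.2 hbb' hi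
        (by linarith) (by linarith) hL
      refine ⟨x', ⟨le_trans hx.1 hx'mem.1, hx'mem.2⟩, Or.inr ?_, hineq⟩
      have := hadd a x' b' le_rfl (le_trans hx.1 hx'mem.1) hx'mem.2 le_rfl
      rw [hux'] at this
      linarith
  obtain ⟨x', hx'mem, hcond, hineq⟩ := main
  have step : Iflat f a b' v ≤ f x' / T' := csInf_le hbdd ⟨x', hx'mem, hcond, rfl⟩
  have step2 : f x' / T' ≤ f x / T := by
    rw [div_le_div_iff₀ hT'pos hpos]
    exact hineq
  exact le_trans step step2

lemma logConcaveFn_comp_neg {f : ℝ → ℝ} (hf : LogConcaveFn f) :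
    LogConcaveFn (fun s => f (-s)) := by
  refine ⟨fun x => hf.1 _, fun x y t ht => ?_⟩
  have h := hf.2 (-x) (-y) t ht
  have harg : t * -x + (1 - t) * -y = -(t * x + (1 - t) * y) := by ring
  rw [harg] at h
  exact h

lemma integral_reflect (f : ℝ → ℝ) (p q : ℝ) :
    (∫ s in (-q)..(-p), f (-s)) = ∫ s in p..q, f s := by
  rw [intervalIntegral.integral_comp_neg]
  simp

lemma Iflat_reflect (f : ℝ → ℝ) (a b v : ℝ) :
    Iflat (fun s => f (-s)) (-b) (-a) v = Iflat f a b v := by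
  unfold Iflat
  congr 1
  ext y
  have eT : (∫ s in (-b)..(-a), f (-s)) = ∫ s in a..b, f s := integral_reflect f a b
  constructor
  · rintro ⟨x, hx, hor, rfl⟩
    refine ⟨-x, ⟨by linarith [hx.2], by linarith [hx.1]⟩, ?_, ?_⟩
    · rcases hor with h | h
      · refine Or.inr ?_
        show (∫ s in (-x)..b, f s) = v * ∫ s in a..b, f s
        have e1 : (∫ s in (-b)..x, f (-s)) = ∫ s in (-x)..b, f s := by
          have := integral_reflect f (-x) b
          simpa using this
        rw [e1, eT] at h
        exact h
      · refine Or.inl ?_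
        show (∫ s in a..(-x), f s) = v * ∫ s in a..b, f s
        have e1 : (∫ s in x..(-a), f (-s)) = ∫ s in a..(-x), f s := by
          have := integral_reflect f a (-x)
          simpa using this
        rw [e1, eT] at h
        exact h
    · show (fun s => f (-s)) x / (∫ s in (-b)..(-a), f (-s)) = f (-x) / ∫ s in a..b, f s
      rw [eT]
  · rintro ⟨x, hx, hor, rfl⟩
    refine ⟨-x, ⟨by linarith [hx.2], by linarith [hx.1]⟩, ?_, ?_⟩
    · rcases hor with h | h
      · refine Or.inr ?_
        show (∫ s in (-x)..(-a), f (-s)) = v * ∫ s in (-b)..(-a), f (-s)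
        rw [integral_reflect f a x, eT]
        exact h
      · refine Or.inl ?_
        show (∫ s in (-b)..(-x), f (-s)) = v * ∫ s in (-b)..(-a), f (-s)
        rw [integral_reflect f x b, eT]
        exact h
    · show f x / (∫ s in a..b, f s) = (fun s => f (-s)) (-x) / ∫ s in (-b)..(-a), f (-s)
      rw [eT]
      simp

/-- for log-concave `f` and fixed `v ∈ (0,1)`, the half-line profile
`(a,b) ↦ I♭(f,[a,b])(v)` is nonincreasing in `b` and nondecreasing in `a`
(over pairs with finite positive total mass, ensured by integrability and `hpos`). -/
theorem stmt4 (f : ℝ → ℝ) (hf : LogConcaveFn f) (v : ℝ) (hv : v ∈ Set.Ioo (0:ℝ) 1)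
    (a b a' b' : ℝ) (hab : a < b) (hb' : b ≤ b') (ha' : a' ≤ a)
    (hint : IntervalIntegrable f MeasureTheory.volume a' b')
    (hpos : 0 < ∫ s in a..b, f s) :
    Iflat f a b' v ≤ Iflat f a b v ∧ Iflat f a' b v ≤ Iflat f a b v := by
  have ha'b' : a' ≤ b' := le_trans ha' (le_trans hab.le hb')
  have hiab' : IntervalIntegrable f volume a b' := by
    refine hint.mono_set ?_
    rw [Set.uIcc_of_le (le_trans hab.le hb'), Set.uIcc_of_le ha'b']
    exact Set.Icc_subset_Icc ha' le_rfl
  have hia'b : IntervalIntegrable f volume a' b := by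
    refine hint.mono_set ?_
    rw [Set.uIcc_of_le (le_trans ha' hab.le), Set.uIcc_of_le ha'b']
    exact Set.Icc_subset_Icc le_rfl hb'
  refine ⟨lemB f hf hv hab.le hb' hiab' hpos, ?_⟩
  have hig : IntervalIntegrable (fun s => f (-s)) volume (-b) (-a') :=
    ((IntervalIntegrable.iff_comp_neg).mp hia'b).symm
  have hposg : 0 < ∫ s in (-b)..(-a), f (-s) := by
    rw [integral_reflect f a b]
    exact hpos
  have second0 := lemB (fun s => f (-s)) (logConcaveFn_comp_neg hf) hv
    (neg_le_neg hab.le) (neg_le_neg ha') hig hposg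
  calc Iflat f a' b v = Iflat (fun s => f (-s)) (-b) (-a') v :=
        (Iflat_reflect f a' b v).symm
    _ ≤ Iflat (fun s => f (-s)) (-b) (-a) v := second0
    _ = Iflat f a b v := Iflat_reflect f a b v
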